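/- Define the multi-fold fusion multiplicity of a list of sectors recursively by N_{[]}^c := δ_{c,1} and N_{a::L}^c := ∑_i N_{L}^i N_{ai}^c. Then for every nonempty list L = [a₁, …, aₙ] (n ≥ 1) and every c ∈ 𝒞, the generalized Verlinde formula holds: (N_{L}^c : ℂ) = ∑_x (∏_{i=1}^{n} S_{aᵢ x}) · S_{c̄x} / S_{1x}^{n-1}. -/

import Mathlib

/-- Multi-fold fusion multiplicity of a list of sectors:
`Nlist [] c = δ_{c,1}` and `Nlist (a :: L) c = ∑ i, Nlist L i * N a i c`. -/
def Nlist {𝒞 : Type*} [Fintype 𝒞] [DecidableEq 𝒞] (one : 𝒞)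
    (N : 𝒞 → 𝒞 → 𝒞 → ℕ) : List 𝒞 → 𝒞 → ℕ
  | [], c => if c = one then 1 else 0
  | a :: L, c => ∑ i, Nlist one N L i * N a i c

/-- generalized Verlinde formula for a nonempty list of sectors:
`Nlist L c = ∑ x, (∏_{a ∈ L} S a x) * S (bar c) x / (S 1 x) ^ (L.length - 1)`. -/
theorem verlinde_stmt10 {𝒞 : Type*} [Fintype 𝒞] [DecidableEq 𝒞]
    (one : 𝒞) (bar : 𝒞 → 𝒞)
    (hbar_one : bar one = one) (hbar_invol : ∀ a, bar (bar a) = a)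
    (N : 𝒞 → 𝒞 → 𝒞 → ℕ)
    (hN_vac : ∀ a b, N a b one = if b = bar a then 1 else 0)
    (S : 𝒞 → 𝒞 → ℂ)
    (hS_sym : ∀ a b, S a b = S b a)
    (hS_conj : ∀ a b, S a b = (starRingEnd ℂ) (S (bar a) b))
    (hS_nd : ∀ x, S one x ≠ 0)
    (hfus : ∀ a b x, ∑ c, (N a b c : ℂ) * S c x = S a x * S b x / S one x)
    (hvac : ∀ a, ∑ x, S one x * S a x = if a = one then 1 else 0) :
    ∀ L : List 𝒞, L ≠ [] → ∀ c,
      (Nlist one N L c : ℂ)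
        = ∑ x, (L.map fun a => S a x).prod * S (bar c) x
            / (S one x) ^ (L.length - 1) := by
  -- row orthogonality
  have horth : ∀ a b, ∑ x, S a x * S b x = if b = bar a then 1 else 0 := by
    intro a b
    calc ∑ x, S a x * S b x
        = ∑ x, S one x * (∑ c, (N a b c : ℂ) * S c x) := by
          refine Finset.sum_congr rfl fun x _ => ?_
          rw [hfus, mul_div_assoc', mul_comm (S one x), mul_div_assoc, div_self (hS_nd x), mul_one]
      _ = ∑ c, (N a b c : ℂ) * ∑ x, S one x * S c x := by
          simp only [Finset.mul_sum]
          rw [Finset.sum_comm]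
          refine Finset.sum_congr rfl fun c _ => ?_
          refine Finset.sum_congr rfl fun x _ => ?_
          ring
      _ = ∑ c, (N a b c : ℂ) * (if c = one then 1 else 0) := by
          refine Finset.sum_congr rfl fun c _ => ?_
          rw [hvac]
      _ = (N a b one : ℂ) := by simp
      _ = if b = bar a then 1 else 0 := by rw [hN_vac]; split <;> simp
  -- key character identity
  have hkey : ∀ (L : List 𝒞) (y : 𝒞), ∑ i, (Nlist one N L i : ℂ) * S i y
      = (L.map fun a => S a y).prod * S one y / (S one y) ^ L.length := by
    intro L
    induction L with
    | nil => intro y; simp [Nlist]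
    | cons a L ih =>
        intro y
        have : ∀ i, (Nlist one N (a :: L) i : ℂ) = ∑ j, (Nlist one N L j : ℂ) * (N a j i : ℂ) := by
          intro i
          simp [Nlist]
        calc ∑ i, (Nlist one N (a :: L) i : ℂ) * S i y
            = ∑ i, (∑ j, (Nlist one N L j : ℂ) * (N a j i : ℂ)) * S i y := by
              refine Finset.sum_congr rfl fun i _ => ?_; rw [this]
          _ = ∑ j, (Nlist one N L j : ℂ) * ∑ i, (N a j i : ℂ) * S i y := by
              simp only [Finset.sum_mul, Finset.mul_sum]
              rw [Finset.sum_comm]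
              refine Finset.sum_congr rfl fun j _ => Finset.sum_congr rfl fun i _ => ?_
              ring
          _ = ∑ j, (Nlist one N L j : ℂ) * (S a y * S j y / S one y) := by
              refine Finset.sum_congr rfl fun j _ => ?_; rw [hfus]
          _ = (S a y / S one y) * ∑ j, (Nlist one N L j : ℂ) * S j y := by
              rw [Finset.mul_sum]
              refine Finset.sum_congr rfl fun j _ => ?_
              ring
          _ = ((a :: L).map fun b => S b y).prod * S one y / (S one y) ^ (a :: L).length := by
              rw [ih y]
              simp only [List.map_cons, List.prod_cons, List.length_cons]
              rw [pow_succ]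
              field_simp
  intro L hL c
  obtain ⟨a₀, L', rfl⟩ := List.exists_cons_of_ne_nil hL
  set M : List 𝒞 := a₀ :: L' with hM
  have hlen : M.length = L'.length + 1 := rfl
  calc (Nlist one N M c : ℂ)
      = ∑ i, (Nlist one N M i : ℂ) * (if i = c then 1 else 0) := by
        symm
        simp
    _ = ∑ i, (Nlist one N M i : ℂ) * ∑ x, S i x * S (bar c) x := by
        refine Finset.sum_congr rfl fun i _ => ?_
        rw [horth i (bar c)]
        congr 1
        by_cases h : i = c
        · simp [h]
        · have h2 : ¬ bar c = bar i := by
            intro h3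
            exact h (by rw [← hbar_invol i, ← h3, hbar_invol])
          simp [h, h2]
    _ = ∑ x, (∑ i, (Nlist one N M i : ℂ) * S i x) * S (bar c) x := by
        simp only [Finset.mul_sum, Finset.sum_mul]
        rw [Finset.sum_comm]
        refine Finset.sum_congr rfl fun x _ => Finset.sum_congr rfl fun i _ => ?_
        ring
    _ = ∑ x, (M.map fun a => S a x).prod * S (bar c) x / (S one x) ^ (M.length - 1) := by
        refine Finset.sum_congr rfl fun x _ => ?_
        rw [hkey M x, hlen]
        simp only [Nat.add_sub_cancel]
        rw [pow_succ]
        have := hS_nd x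
        field_simp
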